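/- Let k > n be an integer, let β'_0, …, β'_{k−1} and α'_0, …, α'_k be complex numbers, and set N_E(z) = β'_0 + β'_1 z + … + β'_{k−1} z^{k−1} and D_E(z) = α'_0 + α'_1 z + … + α'_k z^k. Then the polynomials N_f = z·B_n^{♯n}·N_E + A_n·D_E and D_f = z·A_n^{♯n}·N_E + B_n·D_E both have degree at most k if and only if for every ℓ with 0 ≤ ℓ ≤ n−1: Σ_{j=0}^{n−ℓ−1} ( conj(b_{n−ℓ−j−1})·β'_{k−1−j} + a_{ℓ+j+1}·α'_{k−j} ) = 0. (This justifies Step 4′ of the algorithm: only the top n numerator coefficients of the parameter are constrained, by the same relation (β'_{k−1}, …, β'_{k−n})ᵀ = −B̃^{−1}A·(α'_k, …, α'_{k−n+1})ᵀ as in the case k = n, while the remaining coefficients are free.) -/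

import Mathlib

open Polynomial

/-- The pair `(A_j, B_j)` of polynomials from the recursion (1.8a):
`A_0 = γ_n`, `B_0 = 1`, `A_{j+1}(z) = z·A_j(z) + γ_{n-j-1}·B_j(z)`,
`B_{j+1}(z) = z·conj(γ_{n-j-1})·A_j(z) + B_j(z)`. -/
noncomputable def schurAB (γ : ℕ → ℂ) (n : ℕ) : ℕ → Polynomial ℂ × Polynomial ℂ
  | 0 => (C (γ n), 1)
  | j + 1 =>
      (X * (schurAB γ n j).1 + C (γ (n - j - 1)) * (schurAB γ n j).2,
       X * C (starRingEnd ℂ (γ (n - j - 1))) * (schurAB γ n j).1 + (schurAB γ n j).2)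

/-- The reflection `P^{♯k}`: the coefficient of `z^j` is `conj` of the coefficient of
`z^{k-j}` of `P`, i.e. `P^{♯k}(z) = z^k · conj(P(1/conj z))` for `P` of degree ≤ k. -/
noncomputable def sharp (k : ℕ) (P : Polynomial ℂ) : Polynomial ℂ :=
  ∑ j ∈ Finset.range (k + 1), C (starRingEnd ℂ (P.coeff (k - j))) * X ^ j

lemma sharp_coeff (m : ℕ) (P : Polynomial ℂ) (i : ℕ) :
    (sharp m P).coeff i = if i ≤ m then starRingEnd ℂ (P.coeff (m - i)) else 0 := by
  unfold sharp
  rw [finset_sum_coeff]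
  simp only [coeff_C_mul, coeff_X_pow, mul_ite, mul_one, mul_zero]
  simp [Finset.sum_ite_eq', Nat.lt_succ_iff]

lemma sharp_natDegree_le (m : ℕ) (P : Polynomial ℂ) : (sharp m P).natDegree ≤ m := by
  apply Polynomial.natDegree_sum_le_of_forall_le
  intro j hj
  exact (natDegree_C_mul_le _ _).trans
    ((natDegree_X_pow_le (R := ℂ) j).trans (Nat.lt_succ_iff.1 (Finset.mem_range.1 hj)))

lemma sharp_add (m : ℕ) (P Q : Polynomial ℂ) : sharp m (P + Q) = sharp m P + sharp m Q := by
  ext i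
  simp only [sharp_coeff, coeff_add]
  split <;> simp

lemma sharp_C_mul (m : ℕ) (c : ℂ) (P : Polynomial ℂ) :
    sharp m (C c * P) = C (starRingEnd ℂ c) * sharp m P := by
  ext i
  simp only [sharp_coeff, coeff_C_mul]
  split <;> simp

lemma sharp_X_mul (m : ℕ) (P : Polynomial ℂ) : sharp (m + 1) (X * P) = sharp m P := by
  ext i
  simp only [sharp_coeff]
  rcases Nat.lt_trichotomy i (m+1) with h | h | h
  · rw [if_pos (by omega), if_pos (by omega)]
    have : m + 1 - i = (m - i) + 1 := by omega
    rw [this, coeff_X_mul]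
  · subst h
    rw [if_pos le_rfl, if_neg (by omega)]
    simp [Polynomial.mul_coeff_zero]
  · rw [if_neg (by omega), if_neg (by omega)]

lemma sharp_succ (m : ℕ) (P : Polynomial ℂ) (h : P.natDegree ≤ m) :
    sharp (m + 1) P = X * sharp m P := by
  ext i
  simp only [sharp_coeff]
  cases i with
  | zero =>
    rw [if_pos (Nat.zero_le _), Polynomial.mul_coeff_zero]
    have h0 : P.coeff (m + 1) = 0 := coeff_eq_zero_of_natDegree_lt (by omega)
    simp [h0, coeff_X_zero]
  | succ i =>
    rw [coeff_X_mul, sharp_coeff]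
    rcases Nat.lt_trichotomy i (m+1) with h' | h' | h'
    · rw [if_pos (by omega), if_pos (by omega)]
      congr 2
      omega
    · rw [if_neg (by omega), if_neg (by omega)]
    · rw [if_neg (by omega), if_neg (by omega)]

lemma schurAB_deg (γ : ℕ → ℂ) (n : ℕ) : ∀ j,
    ((schurAB γ n j).1.natDegree ≤ j ∧ (schurAB γ n j).2.natDegree ≤ j)
      ∧ (schurAB γ n j).2.coeff 0 = 1
  | 0 => by simp [schurAB, natDegree_C]
  | j + 1 => by
    obtain ⟨⟨h1, h2⟩, h0⟩ := schurAB_deg γ n j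
    refine ⟨⟨?_, ?_⟩, ?_⟩
    · apply le_trans (natDegree_add_le _ _)
      simp only [max_le_iff]
      constructor
      · exact le_trans (natDegree_mul_le) (by simp [natDegree_X]; omega)
      · exact le_trans (natDegree_mul_le) (by simp [natDegree_C]; omega)
    · apply le_trans (natDegree_add_le _ _)
      simp only [max_le_iff]
      refine ⟨le_trans natDegree_mul_le ?_, by omega⟩
      calc (X * C (starRingEnd ℂ (γ (n - j - 1)))).natDegree + (schurAB γ n j).1.natDegree
          ≤ 1 + j := by
            gcongr
            exact le_trans natDegree_mul_le (by simp [natDegree_C])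
      _ = j + 1 := by omega
    · simp only [schurAB, coeff_add, Polynomial.mul_coeff_zero]
      simp [h0]

lemma schurAB_key (γ : ℕ → ℂ) (n : ℕ) : ∀ j, ∃ c : ℂ,
    (schurAB γ n j).2 * sharp j (schurAB γ n j).2
      - (schurAB γ n j).1 * sharp j (schurAB γ n j).1 = C c * X ^ j
  | 0 => by
    refine ⟨1 - γ n * starRingEnd ℂ (γ n), ?_⟩
    simp only [schurAB]
    have h1 : sharp 0 (1 : Polynomial ℂ) = 1 := by
      ext i
      simp only [sharp_coeff]
      rcases Nat.eq_zero_or_pos i with h | h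
      · subst h; simp
      · rw [if_neg (by omega), Polynomial.coeff_one, if_neg (by omega)]
    have h2 : sharp 0 (C (γ n)) = C (starRingEnd ℂ (γ n)) := by
      ext i
      simp only [sharp_coeff]
      split
      · simp_all
      · rw [coeff_C, if_neg (by omega)]
    rw [h1, h2]
    simp only [map_sub, map_mul, map_one, pow_zero]
    ring
  | j + 1 => by
    obtain ⟨c, hc⟩ := schurAB_key γ n j
    obtain ⟨⟨h1, h2⟩, _⟩ := schurAB_deg γ n j
    set g := γ (n - j - 1)
    set A := (schurAB γ n j).1
    set B := (schurAB γ n j).2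
    have hA' : (schurAB γ n (j+1)).1 = X * A + C g * B := rfl
    have hB' : (schurAB γ n (j+1)).2 = X * C (starRingEnd ℂ g) * A + B := rfl
    have hsA : sharp (j+1) (schurAB γ n (j+1)).1
        = sharp j A + C (starRingEnd ℂ g) * (X * sharp j B) := by
      rw [hA', sharp_add, sharp_X_mul, sharp_C_mul, sharp_succ j B h2]
    have hsB : sharp (j+1) (schurAB γ n (j+1)).2
        = C g * sharp j A + X * sharp j B := by
      rw [hB', sharp_add, sharp_succ j B h2, mul_assoc, sharp_X_mul, sharp_C_mul,
        Complex.conj_conj]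
    refine ⟨(1 - g * starRingEnd ℂ g) * c, ?_⟩
    rw [hsA, hsB, hA', hB']
    have expand : (X * C (starRingEnd ℂ g) * A + B) * (C g * sharp j A + X * sharp j B)
        - (X * A + C g * B) * (sharp j A + C (starRingEnd ℂ g) * (X * sharp j B))
        = (1 - C g * C (starRingEnd ℂ g)) * X * (B * sharp j B - A * sharp j A) := by ring
    rw [expand, hc]
    simp only [map_mul, map_sub, map_one]
    ring

lemma sum_tail (f : ℕ → ℂ) (K s : ℕ) (hs : s ≤ K) (h0 : ∀ j, j + s < K → f j = 0) :
    ∑ j ∈ Finset.range K, f j = ∑ t ∈ Finset.range s, f (K - 1 - t) := by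
  rw [← Finset.sum_range_reflect]
  symm
  apply Finset.sum_subset (Finset.range_subset_range.2 hs)
  intro t ht hts
  simp only [Finset.mem_range] at ht hts
  exact h0 _ (by omega)

/-- coeff of `P * (∑_{j<K} C (c j) X^j)` at `e`, when every `j < K` satisfies `j ≤ e`. -/
lemma coeff_mul_expand (P : Polynomial ℂ) (c : ℕ → ℂ) (K e : ℕ) (he : K ≤ e + 1) :
    (P * ∑ j ∈ Finset.range K, C (c j) * X ^ j).coeff e
      = ∑ j ∈ Finset.range K, c j * P.coeff (e - j) := by
  rw [Finset.mul_sum, finset_sum_coeff]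
  apply Finset.sum_congr rfl
  intro j hj
  simp only [Finset.mem_range] at hj
  rw [show P * (C (c j) * X ^ j) = C (c j) * P * X ^ j from by ring,
    Polynomial.coeff_mul_X_pow', if_pos (by omega), coeff_C_mul]

/-- Coefficient of `X * sharp n P * NE + Q * DE` at `k + ℓ + 1`. -/
lemma coeff_combo (n k : ℕ) (hk : n < k) (β' α' : ℕ → ℂ)
    (P Q : Polynomial ℂ) (hQ : Q.natDegree ≤ n) (ℓ : ℕ) (hℓ : ℓ < n) :
    (X * sharp n P * (∑ j ∈ Finset.range k, C (β' j) * X ^ j)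
        + Q * ∑ j ∈ Finset.range (k + 1), C (α' j) * X ^ j).coeff (k + ℓ + 1)
      = ∑ t ∈ Finset.range (n - ℓ),
        (starRingEnd ℂ (P.coeff (n - ℓ - t - 1)) * β' (k - 1 - t)
          + Q.coeff (ℓ + t + 1) * α' (k - t)) := by
  rw [coeff_add]
  have e1 : (X * sharp n P * (∑ j ∈ Finset.range k, C (β' j) * X ^ j)).coeff (k + ℓ + 1)
      = (sharp n P * (∑ j ∈ Finset.range k, C (β' j) * X ^ j)).coeff (k + ℓ) := by
    rw [show X * sharp n P * (∑ j ∈ Finset.range k, C (β' j) * X ^ j)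
        = (sharp n P * (∑ j ∈ Finset.range k, C (β' j) * X ^ j)) * X ^ 1 from by ring,
      Polynomial.coeff_mul_X_pow', if_pos (by omega)]
    norm_num
  rw [e1, coeff_mul_expand _ _ _ _ (by omega), coeff_mul_expand _ _ _ _ (by omega)]
  rw [sum_tail _ k (n - ℓ) (by omega)
      (fun j hj => by rw [sharp_coeff, if_neg (by omega), mul_zero]),
    sum_tail _ (k + 1) (n - ℓ) (by omega)
      (fun j hj => by
        rw [coeff_eq_zero_of_natDegree_lt (show Q.natDegree < k + ℓ + 1 - j by omega),
          mul_zero]),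
    ← Finset.sum_add_distrib]
  apply Finset.sum_congr rfl
  intro t ht
  simp only [Finset.mem_range] at ht
  rw [sharp_coeff, if_pos (by omega)]
  have e2 : k + ℓ - (k - 1 - t) = ℓ + t + 1 := by omega
  have e3 : n - (ℓ + t + 1) = n - ℓ - t - 1 := by omega
  have e4 : k + ℓ + 1 - (k + 1 - 1 - t) = ℓ + t + 1 := by omega
  have e5 : k + 1 - 1 - t = k - t := by omega
  rw [e2, e3, e4, e5]
  ring

lemma coeff_mul_expand' (P : Polynomial ℂ) (c : ℕ → ℂ) (K e : ℕ) (he : e < K) :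
    (P * ∑ j ∈ Finset.range K, C (c j) * X ^ j).coeff e
      = ∑ j ∈ Finset.range (e + 1), c j * P.coeff (e - j) := by
  rw [Finset.mul_sum, finset_sum_coeff,
    ← Finset.sum_subset (Finset.range_subset_range.2 (show e + 1 ≤ K by omega))]
  · apply Finset.sum_congr rfl
    intro j hj
    simp only [Finset.mem_range] at hj
    rw [show P * (C (c j) * X ^ j) = C (c j) * P * X ^ j from by ring,
      Polynomial.coeff_mul_X_pow', if_pos (by omega), coeff_C_mul]
  · intro j hj hj2
    simp only [Finset.mem_range] at hj hj2
    rw [show P * (C (c j) * X ^ j) = C (c j) * P * X ^ j from by ring,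
      Polynomial.coeff_mul_X_pow', if_neg (by omega)]

lemma coeff_S (n k : ℕ) (hk : n < k) (β' α' : ℕ → ℂ) (P Q : Polynomial ℂ)
    (p ℓ : ℕ) (hpℓ : p + ℓ + 1 = n) :
    ((P.map (starRingEnd ℂ)) * (∑ j ∈ Finset.range n, C (β' (k - 1 - j)) * X ^ j)
      + ((sharp n Q).map (starRingEnd ℂ))
          * (∑ j ∈ Finset.range n, C (α' (k - j)) * X ^ j)).coeff p
    = ∑ t ∈ Finset.range (n - ℓ),
        (starRingEnd ℂ (P.coeff (n - ℓ - t - 1)) * β' (k - 1 - t)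
          + Q.coeff (ℓ + t + 1) * α' (k - t)) := by
  rw [coeff_add, coeff_mul_expand' _ _ _ _ (by omega), coeff_mul_expand' _ _ _ _ (by omega),
    ← Finset.sum_add_distrib, show n - ℓ = p + 1 from by omega]
  apply Finset.sum_congr rfl
  intro t ht
  simp only [Finset.mem_range] at ht
  rw [Polynomial.coeff_map, Polynomial.coeff_map, sharp_coeff, if_pos (by omega)]
  rw [show p + 1 - t - 1 = p - t from by omega, show ℓ + t + 1 = n - (p - t) from by omega]
  rw [Complex.conj_conj]
  ring

lemma key_imp (n k : ℕ) (hk : n < k) (β' α' : ℕ → ℂ) (A B : Polynomial ℂ)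
    (hB0 : B.coeff 0 = 1)
    (hid : ∃ c : ℂ, B * sharp n B - A * sharp n A = C c * X ^ n)
    (hN : ∀ ℓ < n, ∑ t ∈ Finset.range (n - ℓ),
      (starRingEnd ℂ (B.coeff (n - ℓ - t - 1)) * β' (k - 1 - t)
        + A.coeff (ℓ + t + 1) * α' (k - t)) = 0) :
    ∀ ℓ < n, ∑ t ∈ Finset.range (n - ℓ),
      (starRingEnd ℂ (A.coeff (n - ℓ - t - 1)) * β' (k - 1 - t)
        + B.coeff (ℓ + t + 1) * α' (k - t)) = 0 := by
  set U := ∑ j ∈ Finset.range n, C (β' (k - 1 - j)) * X ^ j with hU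
  set V := ∑ j ∈ Finset.range n, C (α' (k - j)) * X ^ j with hV
  have hNd : (X : Polynomial ℂ) ^ n ∣ B.map (starRingEnd ℂ) * U + (sharp n A).map (starRingEnd ℂ) * V :=
    Polynomial.X_pow_dvd_iff.2 fun p hp => by
      rw [coeff_S n k hk β' α' B A p (n - 1 - p) (by omega)]
      exact hN _ (by omega)
  have hid' : (X : Polynomial ℂ) ^ n ∣ B.map (starRingEnd ℂ) * (sharp n B).map (starRingEnd ℂ)
      - A.map (starRingEnd ℂ) * (sharp n A).map (starRingEnd ℂ) := by
    obtain ⟨c, hc⟩ := hid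
    refine ⟨C (starRingEnd ℂ c), ?_⟩
    have := congrArg (Polynomial.map (starRingEnd ℂ)) hc
    simpa [Polynomial.map_mul, Polynomial.map_sub, Polynomial.map_pow] using this
  have key : (X : Polynomial ℂ) ^ n ∣ B.map (starRingEnd ℂ)
      * (A.map (starRingEnd ℂ) * U + (sharp n B).map (starRingEnd ℂ) * V) := by
    rw [show B.map (starRingEnd ℂ) * (A.map (starRingEnd ℂ) * U + (sharp n B).map (starRingEnd ℂ) * V)
        = A.map (starRingEnd ℂ) * (B.map (starRingEnd ℂ) * U + (sharp n A).map (starRingEnd ℂ) * V)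
          + (B.map (starRingEnd ℂ) * (sharp n B).map (starRingEnd ℂ)
            - A.map (starRingEnd ℂ) * (sharp n A).map (starRingEnd ℂ)) * V from by ring]
    exact dvd_add (hNd.mul_left _) (hid'.mul_right _)
  have hnd : ¬ (X : Polynomial ℂ) ∣ B.map (starRingEnd ℂ) := by
    rw [Polynomial.X_dvd_iff]
    simp [Polynomial.coeff_map, hB0]
  have hD := (Polynomial.prime_X (R := ℂ)).pow_dvd_of_dvd_mul_left n hnd key
  intro ℓ hℓ
  rw [← coeff_S n k hk β' α' A B (n - 1 - ℓ) ℓ (by omega)]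
  exact Polynomial.X_pow_dvd_iff.1 hD _ (by omega)

/-- justifying Step 4′: let `k > n`, `N_E = Σ_{j<k} β'_j z^j`,
`D_E = Σ_{j≤k} α'_j z^j`. Then `N_f = z·B_n^{♯n}·N_E + A_n·D_E` and
`D_f = z·A_n^{♯n}·N_E + B_n·D_E` both have degree at most `k` if and only if for every
`0 ≤ ℓ ≤ n-1`:
`Σ_{j=0}^{n-ℓ-1} ( conj(b_{n-ℓ-j-1})·β'_{k-1-j} + a_{ℓ+j+1}·α'_{k-j} ) = 0`,
where `a_j`, `b_j` are the coefficients of `A_n`, `B_n`. -/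
theorem stmt_17 (n : ℕ) (hn : 1 ≤ n) (γ : ℕ → ℂ)
    (hγ : ∀ j ≤ n, ‖γ j‖ < 1)
    (a b : ℕ → ℂ) (ha : ∀ j, a j = ((schurAB γ n n).1).coeff j)
    (hb : ∀ j, b j = ((schurAB γ n n).2).coeff j)
    (k : ℕ) (hk : n < k) (β' α' : ℕ → ℂ)
    (NE DE : Polynomial ℂ)
    (hNE : NE = ∑ j ∈ Finset.range k, C (β' j) * X ^ j)
    (hDE : DE = ∑ j ∈ Finset.range (k + 1), C (α' j) * X ^ j) :
    ((X * sharp n (schurAB γ n n).2 * NE + (schurAB γ n n).1 * DE).natDegree ≤ k ∧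
     (X * sharp n (schurAB γ n n).1 * NE + (schurAB γ n n).2 * DE).natDegree ≤ k) ↔
    ∀ ℓ < n, ∑ j ∈ Finset.range (n - ℓ),
      (starRingEnd ℂ (b (n - ℓ - j - 1)) * β' (k - 1 - j) + a (ℓ + j + 1) * α' (k - j)) = 0 := by

  obtain ⟨⟨hdA, hdB⟩, hB0⟩ := schurAB_deg γ n n
  set A := (schurAB γ n n).1
  set B := (schurAB γ n n).2
  have hNEdeg : NE.natDegree ≤ k - 1 := by
    rw [hNE]
    apply Polynomial.natDegree_sum_le_of_forall_le
    intro j hj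
    simp only [Finset.mem_range] at hj
    exact (natDegree_C_mul_le _ _).trans ((natDegree_X_pow_le (R := ℂ) j).trans (by omega))
  have hDEdeg : DE.natDegree ≤ k := by
    rw [hDE]
    apply Polynomial.natDegree_sum_le_of_forall_le
    intro j hj
    simp only [Finset.mem_range] at hj
    exact (natDegree_C_mul_le _ _).trans ((natDegree_X_pow_le (R := ℂ) j).trans (by omega))
  have hdeg : ∀ P Q : Polynomial ℂ, Q.natDegree ≤ n →
      (X * sharp n P * NE + Q * DE).natDegree ≤ n + k := by
    intro P Q hQ
    apply le_trans (natDegree_add_le _ _)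
    simp only [max_le_iff]
    constructor
    · refine le_trans natDegree_mul_le ?_
      have h1 : (X * sharp n P).natDegree ≤ 1 + n :=
        le_trans natDegree_mul_le (add_le_add natDegree_X_le (sharp_natDegree_le n P))
      omega
    · refine le_trans natDegree_mul_le ?_
      omega
  constructor
  · rintro ⟨h1, _⟩ ℓ hℓ
    have hz : (X * sharp n B * NE + A * DE).coeff (k + ℓ + 1) = 0 :=
      coeff_eq_zero_of_natDegree_lt (lt_of_le_of_lt h1 (by omega))
    rw [hNE, hDE, coeff_combo n k hk β' α' B A hdA ℓ hℓ] at hz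
    simp only [ha, hb]
    exact hz
  · intro h
    have hN : ∀ ℓ < n, ∑ t ∈ Finset.range (n - ℓ),
        (starRingEnd ℂ (B.coeff (n - ℓ - t - 1)) * β' (k - 1 - t)
          + A.coeff (ℓ + t + 1) * α' (k - t)) = 0 := by
      intro ℓ hℓ
      have := h ℓ hℓ
      simp only [ha, hb] at this
      exact this
    have hD := key_imp n k hk β' α' A B hB0 (schurAB_key γ n n) hN
    constructor <;> rw [Polynomial.natDegree_le_iff_coeff_eq_zero] <;> intro m hm
    · by_cases hm2 : m ≤ k + n
      · rw [show m = k + (m - k - 1) + 1 from by omega, hNE, hDE,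
          coeff_combo n k hk β' α' B A hdA _ (by omega)]
        exact hN _ (by omega)
      · exact coeff_eq_zero_of_natDegree_lt (lt_of_le_of_lt (hdeg B A hdA) (by omega))
    · by_cases hm2 : m ≤ k + n
      · rw [show m = k + (m - k - 1) + 1 from by omega, hNE, hDE,
          coeff_combo n k hk β' α' A B hdB _ (by omega)]
        exact hD _ (by omega)
      · exact coeff_eq_zero_of_natDegree_lt (lt_of_le_of_lt (hdeg A B hdB) (by omega))
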